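/- Let N ≥ 2, γ > 0, and let x_1, ..., x_N ∈ ℝⁿ satisfy |x_i − x_j| ≥ γ for all i ≠ j. Then there exists a unit vector θ ∈ ℝⁿ such that |x_i·θ − x_j·θ| ≥ γ/(√(e·n)·N²) for all i ≠ j. -/

import Mathlib

noncomputable section

open MeasureTheory Set
open scoped ENNReal

abbrev S (m : ℕ) : Set (Fin m → ℝ) := {q | ∑ i, q i ^ 2 ≤ 1}

lemma measurableSet_S (m : ℕ) : MeasurableSet (S m) := by
  apply measurableSet_le (by fun_prop) measurable_const

lemma S_pos (m : ℕ) : 0 < volume (S m) := by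
  have h : Metric.ball (0 : Fin m → ℝ) (1/(m+1)) ⊆ S m := by
    intro q hq
    simp only [Metric.mem_ball, dist_zero_right] at hq
    have hb : ∀ i, |q i| ≤ 1/(m+1) := fun i =>
      (norm_le_pi_norm q i).trans hq.le
    calc ∑ i, q i ^ 2 ≤ ∑ _i : Fin m, (1/(m+1):ℝ)^2 := by
          apply Finset.sum_le_sum; intro i _
          rw [← sq_abs]; exact pow_le_pow_left₀ (abs_nonneg _) (hb i) 2
      _ = m * (1/(m+1):ℝ)^2 := by simp [mul_comm]
      _ ≤ 1 := by
          rw [div_pow, one_pow, mul_one_div, div_le_one (by positivity)]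
          nlinarith [sq_nonneg ((m:ℝ)+1)]
  exact lt_of_lt_of_le (Metric.measure_ball_pos _ _ (by positivity)) (measure_mono h)

lemma S_lt_top (m : ℕ) : volume (S m) < ⊤ := by
  have h : S m ⊆ Metric.closedBall (0 : Fin m → ℝ) 1 := by
    intro q hq
    simp only [Metric.mem_closedBall, dist_zero_right]
    refine (pi_norm_le_iff_of_nonneg zero_le_one).2 fun i => ?_
    have : q i ^ 2 ≤ 1 := le_trans (Finset.single_le_sum (f := fun i => q i ^2)
      (fun i _ => sq_nonneg _) (Finset.mem_univ i)) hq
    rw [Real.norm_eq_abs]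
    exact (sq_le_one_iff_abs_le_one _).1 this
  exact lt_of_le_of_lt (measure_mono h) ((isCompact_closedBall _ _).measure_lt_top)

lemma slab_le (m : ℕ) (s : ℝ) :
    volume {y : Fin (m+1) → ℝ | (∑ i, y i ^ 2 ≤ 1) ∧ |y 0| < s}
      ≤ ENNReal.ofReal (2*s) * volume (S m) := by
  have hmp := volume_preserving_piFinSuccAbove (fun _ : Fin (m+1) => ℝ) 0
  set e := MeasurableEquiv.piFinSuccAbove (fun _ : Fin (m+1) => ℝ) 0 with he
  have hsub : {y : Fin (m+1) → ℝ | (∑ i, y i ^ 2 ≤ 1) ∧ |y 0| < s}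
      ⊆ e ⁻¹' (Ioo (-s) s ×ˢ S m) := by
    intro y hy
    obtain ⟨h1, h2⟩ := hy
    have hsum := Fin.sum_univ_succAbove (fun i => y i ^ 2) 0
    refine mem_preimage.2 ⟨?_, ?_⟩
    · show y 0 ∈ Ioo (-s) s
      exact mem_Ioo.2 (abs_lt.1 h2)
    · show ∑ i : Fin m, y ((0:Fin (m+1)).succAbove i) ^ 2 ≤ 1
      rw [hsum] at h1
      nlinarith [sq_nonneg (y 0)]
  calc volume {y : Fin (m+1) → ℝ | (∑ i, y i ^ 2 ≤ 1) ∧ |y 0| < s}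
      ≤ volume (e ⁻¹' (Ioo (-s) s ×ˢ S m)) := measure_mono hsub
    _ = (volume.prod volume) (Ioo (-s) s ×ˢ S m) := by
        rw [← Measure.volume_eq_prod]
        exact hmp.measure_preimage
          ((measurableSet_Ioo.prod (measurableSet_le (by fun_prop) measurable_const))).nullMeasurableSet
    _ = ENNReal.ofReal (2*s) * volume (S m) := by
        rw [Measure.prod_prod, Real.volume_Ioo]
        ring_nf

lemma pow_ge_exp (m : ℕ) (hm : 1 ≤ m) :
    Real.exp (-1) ≤ ((m : ℝ)/(m+1)) ^ m := by
  have hm0 : (0:ℝ) < m := by exact_mod_cast hm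
  have hb : (0:ℝ) < (m:ℝ)/(m+1) := by positivity
  have hlog : Real.log ((m+1)/(m:ℝ)) ≤ 1/m := by
    have := Real.log_le_sub_one_of_pos (x := ((m:ℝ)+1)/m) (by positivity)
    have h2 : ((m:ℝ)+1)/m - 1 = 1/m := by field_simp; ring
    linarith
  have hlogb : -(1:ℝ) ≤ m * Real.log ((m:ℝ)/(m+1)) := by
    rw [Real.log_div (by positivity) (by positivity)]
    rw [Real.log_div (by positivity) (by positivity)] at hlog
    have := mul_le_mul_of_nonneg_left hlog (le_of_lt hm0)
    rw [mul_one_div, div_self (ne_of_gt hm0)] at this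
    nlinarith
  calc Real.exp (-1) ≤ Real.exp (m * Real.log ((m:ℝ)/(m+1))) := Real.exp_le_exp.2 hlogb
    _ = ((m:ℝ)/(m+1)) ^ m := by
        rw [Real.exp_nat_mul, Real.exp_log hb]

lemma ball_ge (m : ℕ) :
    ENNReal.ofReal (2 / Real.sqrt (Real.exp 1 * (m+1))) * volume (S m)
      ≤ volume (S (m+1)) := by
  have hsqrt_e : (1:ℝ) ≤ Real.sqrt (Real.exp 1) := by
    have := Real.sqrt_le_sqrt (show (1:ℝ) ≤ Real.exp 1 by linarith [Real.add_one_le_exp 1])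
    simpa using this
  rcases Nat.eq_zero_or_pos m with rfl | hm
  · -- m = 0
    have hS0 : S 0 = univ := by
      refine eq_univ_of_forall fun q => ?_
      show ∑ i : Fin 0, q i ^ 2 ≤ 1
      norm_num
    have hvol0 : volume (S 0) = 1 := by       rw [hS0, MeasureTheory.volume_pi, Measure.pi_univ, Finset.univ_eq_empty,
        Finset.prod_empty]
    have hS1 : S 1 = (MeasurableEquiv.funUnique (Fin 1) ℝ) ⁻¹' (Icc (-1) 1) := by
      ext y
      simp only [S, mem_setOf_eq, Fin.sum_univ_one, mem_preimage, MeasurableEquiv.funUnique_apply,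
        mem_Icc]
      rw [show y (default : Fin 1) = y 0 from rfl, ← abs_le, ← sq_le_one_iff_abs_le_one]
    have hvol1 : volume (S 1) = ENNReal.ofReal 2 := by
      erw [hS1, (volume_preserving_funUnique (Fin 1) ℝ).measure_preimage
        measurableSet_Icc.nullMeasurableSet, Real.volume_Icc]
      norm_num
    rw [hvol0, hvol1, mul_one]
    apply ENNReal.ofReal_le_ofReal
    rw [Nat.cast_zero, zero_add, mul_one, div_le_iff₀ (by positivity)]
    nlinarith
  · -- m ≥ 1
    have hmp := volume_preserving_piFinSuccAbove (fun _ : Fin (m+1) => ℝ) 0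
    set e := MeasurableEquiv.piFinSuccAbove (fun _ : Fin (m+1) => ℝ) 0 with he
    set a : ℝ := (Real.sqrt (m+1))⁻¹ with ha
    have ha0 : 0 < a := by positivity
    have ha2 : a ^ 2 = 1/(m+1) := by
      rw [ha, ← one_div, div_pow, one_pow, Real.sq_sqrt (by positivity)]
    set b : ℝ := (m : ℝ)/(m+1) with hb
    have hb0 : 0 < b := by positivity
    have h1ab : 1 - a^2 = b := by rw [ha2, hb]; field_simp; ring
    set T : Set (Fin m → ℝ) := {q | ∑ i, q i ^ 2 ≤ b} with hT
    -- T as a preimage of S m under scaling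
    set r : ℝ := (Real.sqrt b)⁻¹ with hr
    have hr0 : 0 < r := by positivity
    have hTpre : T = (fun q => r • q) ⁻¹' (S m) := by
      ext q
      simp only [hT, mem_setOf_eq, mem_preimage, S, Pi.smul_apply, smul_eq_mul]
      have hc : ∀ i, (r * q i)^2 = r^2 * q i ^2 := fun i => by ring
      rw [Finset.sum_congr rfl (fun i _ => hc i), ← Finset.mul_sum]
      have hr2 : r^2 * b = 1 := by
        rw [hr, ← one_div, div_pow, one_pow, Real.sq_sqrt hb0.le]
        field_simp
      have hr2' : 0 < r^2 := by positivity
      constructor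
      · intro h; nlinarith
      · intro h; nlinarith
    have hvolT : volume T = ENNReal.ofReal ((Real.sqrt b) ^ m) * volume (S m) := by
      have hfr : Module.finrank ℝ (Fin m → ℝ) = m := by
        simp [Module.finrank_pi]
      rw [hTpre, Measure.addHaar_preimage_smul volume (ne_of_gt hr0) (S m), hfr]
      congr 1
      rw [abs_of_pos (by positivity), ← inv_pow, hr, inv_inv]
    have hsub : e ⁻¹' (Ioo (-a) a ×ˢ T) ⊆ S (m+1) := by
      intro y hy
      obtain ⟨h1, h2⟩ := hy
      have h1' : |y 0| ≤ a := by
        have : y 0 ∈ Ioo (-a) a := h1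
        exact (abs_lt.2 (mem_Ioo.1 this)).le
      have h2' : ∑ i : Fin m, y ((0:Fin (m+1)).succAbove i) ^ 2 ≤ b := h2
      show ∑ i : Fin (m+1), y i ^ 2 ≤ 1
      rw [Fin.sum_univ_succAbove (fun i => y i ^ 2) 0]
      have hy0 : y 0 ^ 2 ≤ a ^ 2 := by
        rw [← sq_abs]; exact pow_le_pow_left₀ (abs_nonneg _) h1' 2
      linarith [h1ab ▸ (by linarith : y 0 ^ 2 + ∑ i : Fin m, y ((0:Fin (m+1)).succAbove i) ^ 2 ≤ a^2 + b)]
    have hmeasT : MeasurableSet T := measurableSet_le (by fun_prop) measurable_const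
    have hpre : volume (e ⁻¹' (Ioo (-a) a ×ˢ T)) = ENNReal.ofReal (2*a) * volume T := by
      rw [hmp.measure_preimage ((measurableSet_Ioo.prod hmeasT)).nullMeasurableSet]
      rw [Measure.volume_eq_prod, Measure.prod_prod, Real.volume_Ioo]
      ring_nf
    have hkey : ENNReal.ofReal (2 / Real.sqrt (Real.exp 1 * (m+1)))
        ≤ ENNReal.ofReal (2*a) * ENNReal.ofReal ((Real.sqrt b) ^ m) := by
      rw [← ENNReal.ofReal_mul (by positivity)]
      apply ENNReal.ofReal_le_ofReal
      have hbm : Real.exp (-1) ≤ b ^ m := pow_ge_exp m hm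
      have hsq : (Real.sqrt (Real.exp 1))⁻¹ ≤ (Real.sqrt b) ^ m := by
        have hsb : Real.sqrt (b ^ m) = Real.sqrt b ^ m := by
          rw [show b ^ m = (Real.sqrt b ^ m)^2 by
            rw [← pow_mul, mul_comm, pow_mul, Real.sq_sqrt hb0.le],
            Real.sqrt_sq (by positivity)]
        rw [← Real.sqrt_inv, ← Real.exp_neg, ← hsb]
        exact Real.sqrt_le_sqrt hbm
      rw [Real.sqrt_mul (Real.exp_pos 1).le]
      rw [div_le_iff₀ (by positivity)]
      calc (2:ℝ) = 2 * a * (Real.sqrt (Real.exp 1))⁻¹ * (Real.sqrt (Real.exp 1) * a⁻¹) := by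
            field_simp
        _ ≤ 2 * a * ((Real.sqrt b) ^ m) * (Real.sqrt (Real.exp 1) * Real.sqrt (m+1)) := by
            apply mul_le_mul
            · exact mul_le_mul_of_nonneg_left hsq (by positivity)
            · rw [ha, inv_inv]
            · positivity
            · positivity
        _ = 2 * a * ((Real.sqrt b) ^ m) * (Real.sqrt (Real.exp 1) * Real.sqrt ((m:ℝ)+1)) := by
            norm_num
    calc ENNReal.ofReal (2 / Real.sqrt (Real.exp 1 * (m+1))) * volume (S m)
        ≤ ENNReal.ofReal (2*a) * ENNReal.ofReal ((Real.sqrt b) ^ m) * volume (S m) :=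
          mul_le_mul_left hkey _
      _ = ENNReal.ofReal (2*a) * volume T := by rw [hvolT, mul_assoc]
      _ = volume (e ⁻¹' (Ioo (-a) a ×ˢ T)) := hpre.symm
      _ ≤ volume (S (m+1)) := measure_mono hsub

lemma norm_le_one_iff {k : ℕ} (w : EuclideanSpace ℝ (Fin k)) :
    ‖w‖ ≤ 1 ↔ ∑ i, w i ^ 2 ≤ 1 := by
  rw [EuclideanSpace.norm_eq]
  have hnn : (0:ℝ) ≤ ∑ i, ‖w i‖ ^ 2 := Finset.sum_nonneg fun i _ => sq_nonneg _
  have hco : ∑ i, ‖w i‖ ^ 2 = ∑ i, w i ^ 2 := by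
    apply Finset.sum_congr rfl; intro i _; rw [Real.norm_eq_abs, sq_abs]
  rw [hco] at hnn ⊢
  constructor
  · intro h
    nlinarith [Real.sq_sqrt hnn, Real.sqrt_nonneg (∑ i, w i ^ 2)]
  · intro h
    have := Real.sqrt_le_sqrt h
    simpa using this

lemma euclid_slab (m : ℕ) (v : EuclideanSpace ℝ (Fin (m+1))) (hv : v ≠ 0) (s : ℝ)
    (hslab : volume {y : Fin (m+1) → ℝ | (∑ i, y i ^ 2 ≤ 1) ∧ |y 0| < s}
      ≤ ENNReal.ofReal (2*s) * volume (S m)) :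
    volume {θ : EuclideanSpace ℝ (Fin (m+1)) | ‖θ‖ ≤ 1 ∧ |(inner ℝ v θ : ℝ)| < s * ‖v‖}
      ≤ ENNReal.ofReal (2*s) * volume (S m) := by
  have hvn : (0:ℝ) < ‖v‖ := norm_pos_iff.2 hv
  set u : EuclideanSpace ℝ (Fin (m+1)) := ‖v‖⁻¹ • v with hu_def
  have hu : ‖u‖ = 1 := by
    rw [hu_def, norm_smul, norm_inv, norm_norm, inv_mul_cancel₀ (ne_of_gt hvn)]
  have hon : Orthonormal ℝ (Set.restrict {(0 : Fin (m+1))} (fun _ => u)) := by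
    constructor
    · intro i; exact hu
    · intro i j hij
      exfalso
      apply hij
      ext
      have hi := i.2; have hj := j.2
      simp only [mem_singleton_iff] at hi hj
      rw [hi, hj]
  obtain ⟨b, hb⟩ := hon.exists_orthonormalBasis_extension_of_card_eq
    (by simp [finrank_euclideanSpace_fin])
  have hb0 : b 0 = u := hb 0 (mem_singleton _)
  set A : Set (Fin (m+1) → ℝ) := {y | (∑ i, y i ^ 2 ≤ 1) ∧ |y 0| < s} with hA
  have hAmeas : MeasurableSet A := by
    have hA2 : A = {y : Fin (m+1) → ℝ | ∑ i, y i ^ 2 ≤ 1} ∩ {y | |y 0| < s} := rfl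
    rw [hA2]
    exact (measurableSet_le (by fun_prop) measurable_const).inter
      (measurableSet_lt ((measurable_pi_apply 0).abs) measurable_const)
  have hinner : ∀ θ : EuclideanSpace ℝ (Fin (m+1)), (inner ℝ v θ : ℝ) = ‖v‖ * (b.repr θ 0) := by
    intro θ
    rw [b.repr_apply_apply, hb0, hu_def, real_inner_smul_left]
    field_simp
  have hset : {θ : EuclideanSpace ℝ (Fin (m+1)) | ‖θ‖ ≤ 1 ∧ |(inner ℝ v θ : ℝ)| < s * ‖v‖}
      = ⇑b.repr ⁻¹' (⇑(MeasurableEquiv.toLp 2 (Fin (m+1) → ℝ)).symm ⁻¹' A) := by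
    ext θ
    simp only [mem_setOf_eq, mem_preimage, hA]
    have h1 : ‖θ‖ = ‖b.repr θ‖ := (b.repr.norm_map θ).symm
    have h2 : ((MeasurableEquiv.toLp 2 (Fin (m+1) → ℝ)).symm (b.repr θ)) = ⇑(b.repr θ) := rfl
    rw [h2]
    have hball : ‖θ‖ ≤ 1 ↔ ∑ i, (b.repr θ) i ^ 2 ≤ 1 := by
      rw [h1]; exact norm_le_one_iff _
    constructor
    · rintro ⟨hθ1, hθ2⟩
      refine ⟨hball.1 hθ1, ?_⟩
      rw [hinner θ, abs_mul, abs_of_pos hvn, mul_comm s ‖v‖] at hθ2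
      exact lt_of_mul_lt_mul_left hθ2 hvn.le
    · rintro ⟨hθ1, hθ2⟩
      refine ⟨hball.2 hθ1, ?_⟩
      rw [hinner θ, abs_mul, abs_of_pos hvn, mul_comm s ‖v‖]
      exact (mul_lt_mul_iff_right₀ hvn).2 hθ2
  rw [hset, b.measurePreserving_repr.measure_preimage]
  · rw [(EuclideanSpace.volume_preserving_symm_measurableEquiv_toLp (Fin (m+1))).measure_preimage
      hAmeas.nullMeasurableSet]
    exact hslab
  · exact (hAmeas.preimage (MeasurableEquiv.measurable _)).nullMeasurableSet

lemma euclid_ball (m : ℕ) :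
    volume {θ : EuclideanSpace ℝ (Fin (m+1)) | ‖θ‖ ≤ 1} = volume (S (m+1)) := by
  have hset : {θ : EuclideanSpace ℝ (Fin (m+1)) | ‖θ‖ ≤ 1}
      = ⇑(MeasurableEquiv.toLp 2 (Fin (m+1) → ℝ)).symm ⁻¹' (S (m+1)) := by
    ext θ
    simp only [mem_setOf_eq, mem_preimage]
    exact norm_le_one_iff θ
  rw [hset, (EuclideanSpace.volume_preserving_symm_measurableEquiv_toLp (Fin (m+1))).measure_preimage
    (measurableSet_S (m+1)).nullMeasurableSet]

/-- given `N` points of `ℝⁿ` with pairwise distances at least `γ`, there is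
a unit vector `θ` such that the projections `xᵢ·θ` are pairwise at distance at least
`γ/(√(e·n)·N²)`. -/
theorem exists_good_projection (n N : ℕ) (hN : 2 ≤ N) (γ : ℝ) (hγ : 0 < γ)
    (x : Fin N → EuclideanSpace ℝ (Fin n))
    (hx : ∀ i j : Fin N, i ≠ j → γ ≤ ‖x i - x j‖) :
    ∃ θ : EuclideanSpace ℝ (Fin n), ‖θ‖ = 1 ∧ ∀ i j : Fin N, i ≠ j →
      γ / (Real.sqrt (Real.exp 1 * n) * (N : ℝ) ^ 2)
        ≤ |(inner ℝ (x i) θ : ℝ) - (inner ℝ (x j) θ : ℝ)| := by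
  -- the two distinct indices
  have hij01 : (⟨0, by omega⟩ : Fin N) ≠ (⟨1, by omega⟩ : Fin N) := by
    intro h
    exact absurd (congrArg Fin.val h) (by simp)
  -- n ≥ 1
  rcases Nat.eq_zero_or_pos n with rfl | hn
  · exfalso
    haveI : Subsingleton (EuclideanSpace ℝ (Fin 0)) :=
      ⟨fun a b => by ext i; exact i.elim0⟩
    have h := hx _ _ hij01
    rw [Subsingleton.elim (x ⟨0, by omega⟩ - x ⟨1, by omega⟩) 0, norm_zero] at h
    linarith
  obtain ⟨m, rfl⟩ : ∃ m, n = m + 1 := ⟨n - 1, by omega⟩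
  have hNR : (0:ℝ) < N := by exact_mod_cast (by omega : 0 < N)
  have hsq : (0:ℝ) < Real.sqrt (Real.exp 1 * (m+1)) := Real.sqrt_pos.2 (by positivity)
  set s : ℝ := 1 / (Real.sqrt (Real.exp 1 * (m+1)) * (N:ℝ)^2) with hs_def
  have hs0 : 0 < s := by positivity
  set Bad : Fin N × Fin N → Set (EuclideanSpace ℝ (Fin (m+1))) := fun p =>
    {θ | ‖θ‖ ≤ 1 ∧ |(inner ℝ (x p.1 - x p.2) θ : ℝ)| < s * ‖x p.1 - x p.2‖} with hBad
  set K : Finset (Fin N × Fin N) := Finset.univ.offDiag with hK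
  -- each bad set is small
  have hBadLe : ∀ p ∈ K, volume (Bad p) ≤ ENNReal.ofReal (2*s) * volume (S m) := by
    intro p hp
    have hpne : p.1 ≠ p.2 := (Finset.mem_offDiag.1 hp).2.2
    have hvne : x p.1 - x p.2 ≠ 0 := by
      intro h0
      have := hx p.1 p.2 hpne
      rw [h0, norm_zero] at this
      linarith
    exact euclid_slab m _ hvne s (slab_le m s)
  -- total bad measure is < ball measure
  have hKcard : K.card = N * N - N := by
    rw [hK, Finset.offDiag_card]
    simp
  have hUnionLe : volume (⋃ p ∈ K, Bad p) < volume {θ : EuclideanSpace ℝ (Fin (m+1)) | ‖θ‖ ≤ 1} := by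
    have h1 : volume (⋃ p ∈ K, Bad p) ≤ ∑ p ∈ K, volume (Bad p) := measure_biUnion_finset_le K Bad
    have h2 : ∑ p ∈ K, volume (Bad p) ≤ K.card • (ENNReal.ofReal (2*s) * volume (S m)) :=
      Finset.sum_le_card_nsmul K _ _ hBadLe
    have h3 : (K.card : ℝ≥0∞) * (ENNReal.ofReal (2*s) * volume (S m))
        < ENNReal.ofReal (2 / Real.sqrt (Real.exp 1 * (m+1))) * volume (S m) := by
      rw [← mul_assoc]
      apply ENNReal.mul_lt_mul_left (ne_of_gt (S_pos m)) (ne_of_lt (S_lt_top m))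
      rw [hKcard]
      have hcast : ((N * N - N : ℕ) : ℝ≥0∞) = ENNReal.ofReal ((N*N - N : ℕ) : ℝ) := by
        rw [ENNReal.ofReal_natCast]
      rw [hcast, ← ENNReal.ofReal_mul (by positivity)]
      apply ENNReal.ofReal_lt_ofReal_iff (by positivity) |>.2
      have hcast2 : ((N * N - N : ℕ) : ℝ) = (N:ℝ)*N - N := by
        push_cast [Nat.cast_sub (by nlinarith : N ≤ N * N)]
        ring
      rw [hcast2, hs_def]
      have hNN : ((N:ℝ)*N - N) * 2 < 2 * (N:ℝ)^2 := by nlinarith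
      have heq : ((N:ℝ)*N - N) * (2 * (1 / (Real.sqrt (Real.exp 1 * (m+1)) * (N:ℝ)^2)))
          = (((N:ℝ)*N - N) * 2) / (Real.sqrt (Real.exp 1 * (m+1)) * (N:ℝ)^2) := by ring
      rw [heq, div_lt_div_iff₀ (by positivity) hsq]
      nlinarith [mul_pos hsq hNR, sq_nonneg ((N:ℝ))]
    calc volume (⋃ p ∈ K, Bad p) ≤ ∑ p ∈ K, volume (Bad p) := h1
      _ ≤ K.card • (ENNReal.ofReal (2*s) * volume (S m)) := h2
      _ = (K.card : ℝ≥0∞) * (ENNReal.ofReal (2*s) * volume (S m)) := by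
          rw [nsmul_eq_mul]
      _ < ENNReal.ofReal (2 / Real.sqrt (Real.exp 1 * (m+1))) * volume (S m) := h3
      _ ≤ volume (S (m+1)) := ball_ge m
      _ = volume {θ : EuclideanSpace ℝ (Fin (m+1)) | ‖θ‖ ≤ 1} := (euclid_ball m).symm
  -- extract a good point
  have hne : ({θ : EuclideanSpace ℝ (Fin (m+1)) | ‖θ‖ ≤ 1} \ ⋃ p ∈ K, Bad p).Nonempty := by
    by_contra hcon
    rw [not_nonempty_iff_eq_empty, diff_eq_empty] at hcon
    exact absurd (measure_mono hcon) (not_le.2 hUnionLe)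
  obtain ⟨θ₀, hθ₀B, hθ₀G⟩ := hne
  simp only [mem_setOf_eq] at hθ₀B
  have hgood : ∀ i j : Fin N, i ≠ j → s * γ ≤ |(inner ℝ (x i - x j) θ₀ : ℝ)| := by
    intro i j hijne
    have hmem : (i, j) ∈ K := Finset.mem_offDiag.2 ⟨Finset.mem_univ _, Finset.mem_univ _, hijne⟩
    have hnotbad : θ₀ ∉ Bad (i, j) := fun hc => hθ₀G (mem_biUnion hmem hc)
    rw [hBad] at hnotbad
    simp only [mem_setOf_eq, not_and, not_lt] at hnotbad
    have := hnotbad hθ₀B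
    calc s * γ ≤ s * ‖x i - x j‖ := by
          exact mul_le_mul_of_nonneg_left (hx i j hijne) hs0.le
      _ ≤ |(inner ℝ (x i - x j) θ₀ : ℝ)| := this
  -- θ₀ ≠ 0
  have hθ₀ne : θ₀ ≠ 0 := by
    intro h0
    have := hgood _ _ hij01
    rw [h0, inner_zero_right, abs_zero] at this
    nlinarith
  have hθ₀pos : 0 < ‖θ₀‖ := norm_pos_iff.2 hθ₀ne
  refine ⟨‖θ₀‖⁻¹ • θ₀, ?_, ?_⟩
  · rw [norm_smul, norm_inv, norm_norm, inv_mul_cancel₀ (ne_of_gt hθ₀pos)]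
  · intro i j hijne
    have hsub : (inner ℝ (x i) (‖θ₀‖⁻¹ • θ₀) : ℝ) - (inner ℝ (x j) (‖θ₀‖⁻¹ • θ₀) : ℝ)
        = ‖θ₀‖⁻¹ * (inner ℝ (x i - x j) θ₀ : ℝ) := by
      rw [← inner_sub_left, real_inner_smul_right]
    rw [hsub, abs_mul, abs_of_pos (by positivity : (0:ℝ) < ‖θ₀‖⁻¹)]
    have hinv1 : (1:ℝ) ≤ ‖θ₀‖⁻¹ := by
      rw [le_inv_comm₀ one_pos hθ₀pos]
      simpa using hθ₀B
    have hconst : γ / (Real.sqrt (Real.exp 1 * ((m:ℝ)+1)) * (N:ℝ)^2) = s * γ := by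
      rw [hs_def]; field_simp
    calc γ / (Real.sqrt (Real.exp 1 * ((m+1:ℕ):ℝ)) * (N:ℝ)^2)
        = s * γ := by rw [← hconst]; norm_num
      _ = 1 * (s * γ) := (one_mul _).symm
      _ ≤ ‖θ₀‖⁻¹ * |(inner ℝ (x i - x j) θ₀ : ℝ)| := by
          exact mul_le_mul hinv1 (hgood i j hijne) (by positivity) (by positivity)
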